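/- arXiv:1305.5344 — 9 statements merged into one kernel-verified Lean document; each statement's English description precedes it below -/
import Mathlib

section
/- Let A be an mth order n-dimensional completely positive tensor with m odd, m ≥ 2. If λ > 0 is a Z-eigenvalue of A with Z-eigenvector x (i.e., A x^{m-1} = λ x and xᵀx = 1), then x is nonnegative, i.e., x_i ≥ 0 for all i. -/
noncomputable section
open Classical Finset

/-- An `m`th order `n`-dimensional real tensor is completely positive if its entries are
given by a sum of entrywise products of finitely many (at least one) nonnegative vectors. -/
def IsCPTensor (m n : ℕ) (A : (Fin m → Fin n) → ℝ) : Prop :=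
  ∃ r : ℕ, 0 < r ∧ ∃ u : Fin r → Fin n → ℝ,
    (∀ k i, 0 ≤ u k i) ∧ ∀ f : Fin m → Fin n, A f = ∑ k, ∏ j, u k (f j)

/-- The `i`-th component of `A x^{m-1}`:
`(A x^{m-1})_i = Σ_{i_2,…,i_m} a_{i i_2⋯i_m} x_{i_2}⋯x_{i_m}`. -/
def contract (m n : ℕ) (hm : 0 < m) (A : (Fin m → Fin n) → ℝ) (x : Fin n → ℝ)
    (i : Fin n) : ℝ :=
  ∑ g : Fin m → Fin n,
    if g ⟨0, hm⟩ = i then A g * ∏ j ∈ Finset.univ.erase (⟨0, hm⟩ : Fin m), x (g j) else 0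

lemma contract_cp_eq (m n : ℕ) (hm : 0 < m) (r : ℕ) (u : Fin r → Fin n → ℝ)
    (A : (Fin m → Fin n) → ℝ) (hAf : ∀ f : Fin m → Fin n, A f = ∑ k, ∏ j, u k (f j))
    (x : Fin n → ℝ) (i : Fin n) :
    contract m n hm A x i = ∑ k, u k i * (∑ t, u k t * x t) ^ (m - 1) := by
  set z : Fin m := ⟨0, hm⟩ with hz
  unfold contract
  have step1 : ∀ g : Fin m → Fin n,
      (if g z = i then A g * ∏ j ∈ Finset.univ.erase z, x (g j) else 0)
      = ∑ k, ∏ j, (fun j t => if j = z then (if t = i then u k t else 0)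
          else u k t * x t) j (g j) := by
    intro g
    by_cases hgz : g z = i
    · simp only [hgz, if_pos rfl, hAf g, Finset.sum_mul]
      refine Finset.sum_congr rfl fun k _ => ?_
      have hzmem : z ∈ (Finset.univ : Finset (Fin m)) := Finset.mem_univ z
      rw [← Finset.mul_prod_erase _ _ hzmem,
          ← Finset.mul_prod_erase _
            (fun j => if j = z then (if g j = i then u k (g j) else 0)
              else u k (g j) * x (g j)) hzmem]
      have h1 : (∏ j ∈ Finset.univ.erase z,
          if j = z then (if g j = i then u k (g j) else 0)
            else u k (g j) * x (g j))
          = ∏ j ∈ Finset.univ.erase z, (u k (g j) * x (g j)) := by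
        refine Finset.prod_congr rfl fun j hj => ?_
        have hjz : j ≠ z := (Finset.mem_erase.mp hj).1
        simp [hjz]
      rw [h1, Finset.prod_mul_distrib]
      simp only [hgz, if_pos rfl, if_true]
      ring
    · rw [if_neg hgz]
      symm
      refine Finset.sum_eq_zero fun k _ => ?_
      apply Finset.prod_eq_zero (Finset.mem_univ z)
      simp [hgz]
  rw [Finset.sum_congr rfl fun g _ => step1 g, Finset.sum_comm]
  refine Finset.sum_congr rfl fun k _ => ?_
  have := Finset.prod_univ_sum (fun _ : Fin m => (Finset.univ : Finset (Fin n)))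
      (fun j t => if j = z then (if t = i then u k t else 0) else u k t * x t)
  rw [Fintype.piFinset_univ] at this
  rw [← this]
  have hzmem : z ∈ (Finset.univ : Finset (Fin m)) := Finset.mem_univ z
  rw [← Finset.mul_prod_erase _ _ hzmem]
  congr 1
  · simp
  · have hcard : (Finset.univ.erase z).card = m - 1 := by
      rw [Finset.card_erase_of_mem hzmem, Finset.card_univ, Fintype.card_fin]
    rw [← hcard, ← Finset.prod_const]
    refine Finset.prod_congr rfl fun j hj => ?_
    have hjz : j ≠ z := (Finset.mem_erase.mp hj).1
    simp [hjz]

/-- For a completely positive tensor of odd order m ≥ 2, a Z-eigenvector associated with a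
positive Z-eigenvalue is entrywise nonnegative. -/
theorem cp_tensor_Z_eigenvector_nonneg_odd (m n : ℕ) (hm : 2 ≤ m) (hodd : Odd m)
    (A : (Fin m → Fin n) → ℝ) (hA : IsCPTensor m n A)
    (lam : ℝ) (hlam : 0 < lam) (x : Fin n → ℝ)
    (heig : ∀ i : Fin n, contract m n (by omega) A x i = lam * x i)
    (hnorm : ∑ i, (x i) ^ 2 = 1) :
    ∀ i : Fin n, 0 ≤ x i := by
  intro i
  obtain ⟨r, hr, u, hu, hAf⟩ := hA
  have heven : Even (m - 1) := Nat.Odd.sub_odd hodd odd_one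
  have hkey : contract m n (by omega) A x i = ∑ k, u k i * (∑ t, u k t * x t) ^ (m - 1) :=
    contract_cp_eq m n (by omega) r u A hAf x i
  have hnonneg : 0 ≤ lam * x i := by
    rw [← heig i, hkey]
    refine Finset.sum_nonneg fun k _ => mul_nonneg (hu k i) (heven.pow_nonneg _)
  exact nonneg_of_mul_nonneg_right hnonneg hlam
end
end

section
/- Let A = (a_{i_1⋯i_m}) be an mth order n-dimensional completely positive tensor with m ≥ 2. If (i_1,…,i_m) is dominated by (j_1,…,j_m) (i.e., the set of distinct indices appearing among i_1,…,i_m is contained in the set of distinct indices appearing among j_1,…,j_m) and a_{j_1⋯j_m} ≠ 0, then a_{i_1⋯i_m} > 0. -/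
noncomputable section
open Classical Finset

/-- Dominance property of a CP tensor: if the distinct indices of the tuple f are contained
in those of the tuple g and the entry at g is nonzero, then the entry at f is positive. -/
theorem cp_tensor_dominance (m n : ℕ) (hm : 2 ≤ m)
    (A : (Fin m → Fin n) → ℝ) (hA : IsCPTensor m n A)
    (f g : Fin m → Fin n) (hdom : Set.range f ⊆ Set.range g) (hne : A g ≠ 0) :
    0 < A f := by
  obtain ⟨r, hr, u, hu, hAeq⟩ := hA
  -- terms are nonneg
  have hterm : ∀ (k : Fin r) (h : Fin m → Fin n), 0 ≤ ∏ j, u k (h j) := fun k h =>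
    Finset.prod_nonneg fun j _ => hu k (h j)
  -- some term at g is positive
  have hg : A g = ∑ k, ∏ j, u k (g j) := hAeq g
  have : ∃ k : Fin r, 0 < ∏ j, u k (g j) := by
    by_contra h
    push_neg at h
    apply hne
    rw [hg]
    have : ∀ k ∈ Finset.univ, ∏ j, u (k : Fin r) (g j) = 0 := fun k _ =>
      le_antisymm (h k) (hterm k g)
    simp [Finset.sum_congr rfl this]
  obtain ⟨k, hk⟩ := this
  -- each factor u k (g j) > 0
  have hgpos : ∀ j : Fin m, 0 < u k (g j) := by
    intro j
    rcases lt_or_eq_of_le (hu k (g j)) with h | h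
    · exact h
    · exfalso
      have : ∏ j, u k (g j) = 0 := Finset.prod_eq_zero (Finset.mem_univ j) h.symm
      rw [this] at hk; exact lt_irrefl 0 hk
  have hfpos : ∀ j : Fin m, 0 < u k (f j) := by
    intro j
    obtain ⟨j', hj'⟩ := hdom ⟨j, rfl⟩
    rw [← hj']; exact hgpos j'
  rw [hAeq f]
  exact Finset.sum_pos' (fun k _ => hterm k f)
    ⟨k, Finset.mem_univ k, Finset.prod_pos fun j _ => hfpos j⟩
end
end

section
/- Let A = (a_{i_1⋯i_m}) be an mth order n-dimensional completely positive tensor with m ≥ 2. If (i_1,…,i_m) is similar to (j_1,…,j_m) (i.e., the set of distinct indices appearing among i_1,…,i_m equals the set of distinct indices appearing among j_1,…,j_m), then a_{j_1⋯j_m} = 0 if and only if a_{i_1⋯i_m} = 0. -/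
noncomputable section
open Classical Finset

/-- If two index tuples are similar (same set of distinct indices), then the corresponding
entries of a CP tensor vanish simultaneously. -/
theorem cp_tensor_similar_zero_iff (m n : ℕ) (hm : 2 ≤ m)
    (A : (Fin m → Fin n) → ℝ) (hA : IsCPTensor m n A)
    (f g : Fin m → Fin n) (hsim : Set.range f = Set.range g) :
    A g = 0 ↔ A f = 0 := by
  obtain ⟨r, hr, u, hu, hAe⟩ := hA
  have key : ∀ h : Fin m → Fin n, A h = 0 ↔ ∀ k, ∃ i ∈ Set.range h, u k i = 0 := by
    intro h
    rw [hAe, Finset.sum_eq_zero_iff_of_nonneg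
      (fun k _ => Finset.prod_nonneg fun j _ => hu k (h j))]
    constructor
    · intro H k
      obtain ⟨j, _, hj⟩ := Finset.prod_eq_zero_iff.mp (H k (Finset.mem_univ k))
      exact ⟨h j, ⟨j, rfl⟩, hj⟩
    · intro H k _
      obtain ⟨i, ⟨j, rfl⟩, hi⟩ := H k
      exact Finset.prod_eq_zero (Finset.mem_univ j) hi
  rw [key f, key g, hsim]
end
end

section
/- Let A = (a_{i_1⋯i_m}) be an mth order n-dimensional completely positive tensor with m ≥ 2, and let I = {(i^{(1)}_1,…,i^{(1)}_m),…,(i^{(s)}_1,…,i^{(s)}_m)} be an s-duplicate of an index tuple (j_1,…,j_m). Then (1/s) Σ_{p=1}^s a_{i^{(p)}_1⋯i^{(p)}_m} ≥ a_{j_1⋯j_m}. -/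
noncomputable section
open Classical Finset

lemma prod_comp_count {m n : ℕ} (u : Fin n → ℝ) (f : Fin m → Fin n) :
    ∏ j, u (f j) = ∏ v : Fin n, u v ^ (Finset.univ.filter (fun q : Fin m => f q = v)).card := by
  rw [← Finset.prod_fiberwise Finset.univ f (fun j => u (f j))]
  refine Finset.prod_congr rfl fun v _ => ?_
  rw [show (∏ q ∈ Finset.univ.filter (fun i : Fin m => f i = v), u (f q))
      = ∏ _q ∈ Finset.univ.filter (fun i : Fin m => f i = v), u v from
    Finset.prod_congr rfl fun q hq => by
      simp only [Finset.mem_filter] at hq; rw [hq.2], Finset.prod_const]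

/-- Strong dominance property of a CP tensor: if the family I (indexed by Fin s) is an
s-duplicate of the tuple jt, then the average of the entries of A over I dominates the
entry of A at jt. -/
theorem cp_tensor_strong_dominance (m n : ℕ) (hm : 2 ≤ m)
    (A : (Fin m → Fin n) → ℝ) (hA : IsCPTensor m n A)
    (s : ℕ) (hs : 0 < s) (I : Fin s → Fin m → Fin n) (jt : Fin m → Fin n)
    (hdom : ∀ p : Fin s, Set.range (I p) ⊆ Set.range jt)
    (hcount : ∀ v : Fin n,
      ∑ p : Fin s, (Finset.univ.filter (fun q : Fin m => I p q = v)).card =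
        s * (Finset.univ.filter (fun q : Fin m => jt q = v)).card) :
    A jt ≤ (1 / (s : ℝ)) * ∑ p : Fin s, A (I p) := by
  obtain ⟨r, hr, u, hu, hAeq⟩ := hA
  have hsR : (0:ℝ) < s := Nat.cast_pos.mpr hs
  rw [hAeq]
  simp only [hAeq]
  rw [Finset.sum_comm, Finset.mul_sum]
  refine Finset.sum_le_sum fun k _ => ?_
  set z : Fin s → ℝ := fun p => ∏ j, u k (I p j) with hz
  have hznn : ∀ p ∈ (Finset.univ : Finset (Fin s)), 0 ≤ z p :=
    fun p _ => Finset.prod_nonneg fun j _ => hu k _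
  have hprod : ∏ p, z p = (∏ j, u k (jt j)) ^ s := by
    simp only [hz]
    have : ∀ p : Fin s, ∏ j, u k (I p j)
        = ∏ v : Fin n, u k v ^ (Finset.univ.filter (fun q : Fin m => I p q = v)).card :=
      fun p => prod_comp_count (u k) (I p)
    simp only [this]
    rw [Finset.prod_comm]
    rw [prod_comp_count (u k) jt, ← Finset.prod_pow]
    refine Finset.prod_congr rfl fun v _ => ?_
    rw [Finset.prod_pow_eq_pow_sum, hcount v, pow_mul']
  have hgm := Real.geom_mean_le_arith_mean_weighted Finset.univ
    (fun _ => 1 / (s:ℝ)) z (fun _ _ => by positivity)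
    (by simp [Finset.card_univ]; field_simp) hznn
  calc ∏ j, u k (jt j)
      = (∏ p, z p) ^ (1 / (s:ℝ)) := by
        rw [hprod, ← Real.rpow_natCast (∏ j, u k (jt j)) s,
          ← Real.rpow_mul (Finset.prod_nonneg fun j _ => hu k _)]
        rw [mul_one_div, div_self (ne_of_gt hsR)]
        rw [Real.rpow_one]
    _ = ∏ p, z p ^ (1 / (s:ℝ)) := (Real.finset_prod_rpow _ _ hznn _).symm
    _ ≤ ∑ p, (1 / (s:ℝ)) * z p := hgm
    _ = (1 / (s:ℝ)) * ∑ p, z p := by rw [Finset.mul_sum]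
end
end

section
/- Let A = (a_{i_1⋯i_m}) be an mth order n-dimensional completely positive tensor with m ≥ 2. Then for any index tuple (j_1,…,j_m) with 1 ≤ j_p ≤ n, we have (1/m) Σ_{p=1}^m a_{j_p j_p ⋯ j_p} ≥ a_{j_1⋯j_m}, where a_{j_p⋯j_p} denotes the diagonal entry with all m indices equal to j_p. -/
noncomputable section
open Classical Finset

lemma prod_le_avg_pow (m : ℕ) (hm : 0 < m) (x : Fin m → ℝ) (hx : ∀ p, 0 ≤ x p) :
    ∏ p, x p ≤ (1 / (m : ℝ)) * ∑ p, x p ^ m := by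
  have hm' : (m : ℝ) ≠ 0 := by positivity
  have h := Real.geom_mean_le_arith_mean_weighted univ (fun _ => 1 / (m : ℝ))
    (fun p => x p ^ m) (fun i _ => by positivity)
    (by simp [Finset.sum_const, mul_comm, hm']) (fun i _ => pow_nonneg (hx i) m)
  have hL : ∀ p, (x p ^ m) ^ ((1 : ℝ) / m) = x p := by
    intro p
    rw [← Real.rpow_natCast (x p) m, ← Real.rpow_mul (hx p), mul_one_div,
      div_self hm', Real.rpow_one]
  calc ∏ p, x p = ∏ p, (x p ^ m) ^ ((1 : ℝ) / m) := (Finset.prod_congr rfl fun p _ => (hL p).symm)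
    _ ≤ ∑ p, (1 / (m : ℝ)) * x p ^ m := h
    _ = (1 / (m : ℝ)) * ∑ p, x p ^ m := by rw [Finset.mul_sum]

/-- The diagonal dominance property of a CP tensor:
(1/m) Σ_{p=1}^m a_{j_p⋯j_p} ≥ a_{j_1⋯j_m}. -/
theorem cp_tensor_diagonal_dominance (m n : ℕ) (hm : 2 ≤ m)
    (A : (Fin m → Fin n) → ℝ) (hA : IsCPTensor m n A)
    (jt : Fin m → Fin n) :
    A jt ≤ (1 / (m : ℝ)) * ∑ p : Fin m, A (fun _ => jt p) := by
  obtain ⟨r, hr, u, hu, hAf⟩ := hA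
  have hm0 : 0 < m := lt_of_lt_of_le (by norm_num) hm
  rw [hAf]
  have hdiag : ∀ p : Fin m, A (fun _ => jt p) = ∑ k, u k (jt p) ^ m := by
    intro p; rw [hAf]; simp [Finset.prod_const]
  calc ∑ k, ∏ j, u k (jt j)
      ≤ ∑ k, (1 / (m : ℝ)) * ∑ p, u k (jt p) ^ m := by
        apply Finset.sum_le_sum
        intro k _
        exact prod_le_avg_pow m hm0 (fun p => u k (jt p)) (fun p => hu k (jt p))
    _ = (1 / (m : ℝ)) * ∑ p : Fin m, A (fun _ => jt p) := by
        rw [← Finset.mul_sum, Finset.sum_comm]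
        congr 1
        exact Finset.sum_congr rfl fun p _ => (hdiag p).symm
end
end

section
/- A real mth order n-dimensional symmetric tensor A = (a_{i_1⋯i_m}) has a symmetric binary decomposition if and only if A is strongly symmetric. In particular, every strongly symmetric tensor A can be written as A = Σ_{k=1}^r α_k (v^{(k)})^m with α_k ∈ ℝ and v^{(k)} ∈ {0,1}^n binary vectors. -/
noncomputable section
open Classical Finset

/-- A tensor is strongly symmetric if two entries coincide whenever their index tuples
have the same set of distinct indices. -/
def StronglySymmetric (m n : ℕ) (A : (Fin m → Fin n) → ℝ) : Prop :=
  ∀ f g : Fin m → Fin n, Set.range f = Set.range g → A f = A g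

/-- A tensor is symmetric if its entries are invariant under any permutation of the indices. -/
def IsSymmetricTensor (m n : ℕ) (A : (Fin m → Fin n) → ℝ) : Prop :=
  ∀ (σ : Equiv.Perm (Fin m)) (f : Fin m → Fin n), A (f ∘ σ) = A f

lemma aux_powerset {n : ℕ} (X : Finset (Fin n)) :
    ∑ U ∈ X.powerset, (-1 : ℝ) ^ (X \ U).card = if X = ∅ then 1 else 0 := by
  classical
  have h : ∑ U ∈ X.powerset, (-1 : ℝ) ^ (X \ U).card
      = ∑ U ∈ X.powerset, (-1 : ℝ) ^ U.card := by
    refine Finset.sum_nbij' (fun U => X \ U) (fun U => X \ U) ?_ ?_ ?_ ?_ ?_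
    · intro U hU; exact Finset.mem_powerset.2 (Finset.sdiff_subset)
    · intro U hU; exact Finset.mem_powerset.2 (Finset.sdiff_subset)
    · intro U hU; exact Finset.sdiff_sdiff_eq_self (Finset.mem_powerset.1 hU)
    · intro U hU; exact Finset.sdiff_sdiff_eq_self (Finset.mem_powerset.1 hU)
    · intro U hU; rfl
  rw [h]
  have h1 := @Finset.sum_powerset_neg_one_pow_card (Fin n) _ X
  have h2 : ((∑ m ∈ X.powerset, (-1 : ℤ) ^ m.card : ℤ) : ℝ)
      = ∑ U ∈ X.powerset, (-1 : ℝ) ^ U.card := by push_cast; ring_nf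
  rw [← h2, h1]
  split <;> norm_num

lemma aux_interval {n : ℕ} (R T : Finset (Fin n)) :
    ∑ S : Finset (Fin n), (if R ⊆ S ∧ S ⊆ T then (-1 : ℝ) ^ (T \ S).card else 0)
      = if T = R then 1 else 0 := by
  classical
  by_cases hRT : R ⊆ T
  · have hfil : (∑ S : Finset (Fin n), (if R ⊆ S ∧ S ⊆ T then (-1 : ℝ) ^ (T \ S).card else 0))
        = ∑ S ∈ Finset.univ.filter (fun S => R ⊆ S ∧ S ⊆ T), (-1 : ℝ) ^ (T \ S).card :=
      (Finset.sum_filter _ _).symm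
    have key : (∑ S ∈ Finset.univ.filter (fun S => R ⊆ S ∧ S ⊆ T), (-1 : ℝ) ^ (T \ S).card)
        = ∑ U ∈ (T \ R).powerset, (-1 : ℝ) ^ ((T \ R) \ U).card := by
      refine Finset.sum_nbij' (fun S => S \ R) (fun U => U ∪ R) ?_ ?_ ?_ ?_ ?_
      · intro S hS
        simp only [Finset.mem_filter] at hS
        exact Finset.mem_powerset.2 (Finset.sdiff_subset_sdiff hS.2.2 le_rfl)
      · intro U hU
        have hU' := Finset.mem_powerset.1 hU
        simp only [Finset.mem_filter, Finset.mem_univ, true_and]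
        exact ⟨Finset.subset_union_right,
          Finset.union_subset (hU'.trans Finset.sdiff_subset) hRT⟩
      · intro S hS
        simp only [Finset.mem_filter] at hS
        exact Finset.sdiff_union_of_subset hS.2.1
      · intro U hU
        have hU' := Finset.mem_powerset.1 hU
        have hdisj : Disjoint U R := by
          refine Finset.disjoint_left.2 fun a ha haR => ?_
          exact (Finset.mem_sdiff.1 (hU' ha)).2 haR
        exact Finset.union_sdiff_cancel_right hdisj
      · intro S hS
        simp only [Finset.mem_filter] at hS
        congr 2
        ext x
        simp only [Finset.mem_sdiff]
        constructor
        · intro ⟨hxT, hxS⟩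
          exact ⟨⟨hxT, fun hxR => hxS (hS.2.1 hxR)⟩, fun h => hxS h.1⟩
        · intro ⟨⟨hxT, hxR⟩, h⟩
          exact ⟨hxT, fun hxS => h ⟨hxS, hxR⟩⟩
    rw [hfil, key, aux_powerset]
    have : T \ R = ∅ ↔ T = R := by
      rw [Finset.sdiff_eq_empty_iff_subset]
      exact ⟨fun h => le_antisymm h hRT, fun h => h.le⟩
    simp only [this]
  · have hTR : T ≠ R := fun h => hRT (h ▸ le_rfl)
    rw [if_neg hTR]
    refine Finset.sum_eq_zero fun S _ => ?_
    rw [if_neg]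
    rintro ⟨h1, h2⟩
    exact hRT (h1.trans h2)

/-- A symmetric tensor has a symmetric binary decomposition (A = Σ_k α_k (v^{(k)})^m with
real coefficients α_k and binary vectors v^{(k)} ∈ {0,1}^n) if and only if it is strongly
symmetric. -/
theorem symmetric_binary_decomposition_iff_strongly_symmetric (m n : ℕ)
    (A : (Fin m → Fin n) → ℝ) (hsym : IsSymmetricTensor m n A) :
    (∃ (r : ℕ) (α : Fin r → ℝ) (v : Fin r → Fin n → ℝ),
      (∀ k i, v k i = 0 ∨ v k i = 1) ∧
      ∀ f : Fin m → Fin n, A f = ∑ k, α k * ∏ j, v k (f j)) ↔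
    StronglySymmetric m n A := by
  constructor
  · rintro ⟨r, α, v, hv, hA⟩ f g hfg
    rw [hA f, hA g]
    refine Finset.sum_congr rfl fun k _ => ?_
    congr 1
    by_cases h : ∃ j, v k (f j) = 0
    · obtain ⟨j, hj⟩ := h
      have hmem : f j ∈ Set.range g := hfg ▸ Set.mem_range_self j
      obtain ⟨j', hj'⟩ := hmem
      rw [Finset.prod_eq_zero (Finset.mem_univ j) hj,
          Finset.prod_eq_zero (Finset.mem_univ j') (by rw [hj']; exact hj)]
    · push_neg at h
      have hf1 : ∀ j, v k (f j) = 1 := fun j => (hv k (f j)).resolve_left (h j)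
      have hg1 : ∀ j, v k (g j) = 1 := fun j => by
        have hmem : g j ∈ Set.range f := hfg.symm ▸ Set.mem_range_self j
        obtain ⟨j', hj'⟩ := hmem
        rw [← hj']; exact hf1 j'
      simp [hf1, hg1]
  · intro hss
    classical
    set β : Finset (Fin n) → ℝ := fun T =>
      if h : ∃ f : Fin m → Fin n, Finset.image f Finset.univ = T then A h.choose else 0
      with hβdef
    have hβ : ∀ f : Fin m → Fin n, A f = β (Finset.image f Finset.univ) := by
      intro f
      have h : ∃ g : Fin m → Fin n, Finset.image g Finset.univ = Finset.image f Finset.univ :=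
        ⟨f, rfl⟩
      rw [hβdef]
      simp only [dif_pos h]
      refine hss _ _ ?_
      have hc := h.choose_spec
      have hcoe : ((Finset.image f Finset.univ : Finset (Fin n)) : Set (Fin n))
          = ((Finset.image h.choose Finset.univ : Finset (Fin n)) : Set (Fin n)) := by
        rw [hc]
      rw [Finset.coe_image, Finset.coe_image, Finset.coe_univ, Set.image_univ,
        Set.image_univ] at hcoe
      exact hcoe
    set α' : Finset (Fin n) → ℝ := fun S =>
      ∑ T : Finset (Fin n), (if S ⊆ T then (-1 : ℝ) ^ (T \ S).card * β T else 0) with hα'def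
    have hinv : ∀ R : Finset (Fin n),
        ∑ S : Finset (Fin n), (if R ⊆ S then α' S else 0) = β R := by
      intro R
      rw [hα'def]
      simp only
      calc (∑ S : Finset (Fin n), if R ⊆ S then
              (∑ T : Finset (Fin n), if S ⊆ T then (-1 : ℝ) ^ (T \ S).card * β T else 0) else 0)
          = ∑ S : Finset (Fin n), ∑ T : Finset (Fin n),
              (if R ⊆ S ∧ S ⊆ T then (-1 : ℝ) ^ (T \ S).card * β T else 0) := by
            refine Finset.sum_congr rfl fun S _ => ?_
            by_cases h : R ⊆ S
            · simp only [if_pos h, h, true_and, if_true]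
            · simp [h]
        _ = ∑ T : Finset (Fin n), ∑ S : Finset (Fin n),
              (if R ⊆ S ∧ S ⊆ T then (-1 : ℝ) ^ (T \ S).card * β T else 0) := Finset.sum_comm
        _ = ∑ T : Finset (Fin n),
              (∑ S : Finset (Fin n), if R ⊆ S ∧ S ⊆ T then (-1 : ℝ) ^ (T \ S).card else 0)
              * β T := by
            refine Finset.sum_congr rfl fun T _ => ?_
            rw [Finset.sum_mul]
            refine Finset.sum_congr rfl fun S _ => ?_
            by_cases h : R ⊆ S ∧ S ⊆ T <;> simp [h]
        _ = ∑ T : Finset (Fin n), (if T = R then (1:ℝ) else 0) * β T := by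
            refine Finset.sum_congr rfl fun T _ => ?_
            rw [aux_interval]
        _ = β R := by simp
    set e := Fintype.equivFin (Finset (Fin n)) with he
    refine ⟨Fintype.card (Finset (Fin n)), fun k => α' (e.symm k),
      fun k i => if i ∈ e.symm k then 1 else 0, fun k i => ?_, fun f => ?_⟩
    · by_cases h : i ∈ e.symm k <;> simp [h]
    · have hprod : ∀ S : Finset (Fin n),
          (∏ j : Fin m, (if f j ∈ S then (1:ℝ) else 0))
          = if Finset.image f Finset.univ ⊆ S then 1 else 0 := by
        intro S
        by_cases h : Finset.image f Finset.univ ⊆ S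
        · rw [if_pos h]
          refine Finset.prod_eq_one fun j _ => ?_
          rw [if_pos (h (Finset.mem_image_of_mem f (Finset.mem_univ j)))]
        · rw [if_neg h]
          obtain ⟨x, hx, hxS⟩ := Finset.not_subset.1 h
          obtain ⟨j, _, rfl⟩ := Finset.mem_image.1 hx
          exact Finset.prod_eq_zero (Finset.mem_univ j) (if_neg hxS)
      have hsum : ∑ k : Fin (Fintype.card (Finset (Fin n))),
          α' (e.symm k) * ∏ j : Fin m, (if f j ∈ e.symm k then (1:ℝ) else 0)
          = ∑ S : Finset (Fin n), α' S * ∏ j : Fin m, (if f j ∈ S then (1:ℝ) else 0) :=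
        Equiv.sum_comp e.symm (fun S => α' S * ∏ j : Fin m, (if f j ∈ S then (1:ℝ) else 0))
      rw [hsum, hβ f, ← hinv (Finset.image f Finset.univ)]
      refine Finset.sum_congr rfl fun S _ => ?_
      rw [hprod S]
      by_cases h : Finset.image f Finset.univ ⊆ S <;> simp [h]
end
end

section
/- Let A = (a_{i_1⋯i_m}) be an mth order n-dimensional strongly symmetric, hierarchically dominated nonnegative tensor. Then for every p with 1 ≤ p ≤ m−1, every q with 1 ≤ q ≤ m−p, and every increasing tuple 1 ≤ i_1 < ⋯ < i_p ≤ n, we have a_{i_1⋯i_p i_p⋯i_p} ≥ Σ a_{j_1⋯j_{p+q} j_{p+q}⋯j_{p+q}}, where the sum runs over all increasing tuples 1 ≤ j_1 < ⋯ < j_{p+q} ≤ n with {i_1,…,i_p} ⊆ {j_1,…,j_{p+q}}, and a_{i_1⋯i_p i_p⋯i_p} denotes the entry whose index tuple is (i_1,…,i_p) followed by m−p repetitions of i_p. -/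
noncomputable section
open Classical Finset

/-- The index tuple of length m consisting of (i_1, …, i_p) followed by m − p repetitions
of i_p. -/
def pad (p m n : ℕ) (hp : 0 < p) (i : Fin p → Fin n) : Fin m → Fin n :=
  fun q => if h : (q : ℕ) < p then i ⟨q, h⟩ else i ⟨p - 1, Nat.sub_lt hp Nat.one_pos⟩

/-- A strongly symmetric nonnegative tensor is hierarchically dominated if for every
1 ≤ p ≤ m − 1 and every increasing tuple i_1 < ⋯ < i_p, the entry a_{i_1⋯i_p i_p⋯i_p}
dominates the sum of the entries a_{j_1⋯j_{p+1} j_{p+1}⋯j_{p+1}} over all increasing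
tuples j_1 < ⋯ < j_{p+1} whose index set contains {i_1, …, i_p}. -/
def HierDominated (m n : ℕ) (A : (Fin m → Fin n) → ℝ) : Prop :=
  ∀ (p : ℕ) (hp : 0 < p), p ≤ m - 1 → ∀ i : Fin p → Fin n, StrictMono i →
    (∑ j ∈ Finset.univ.filter
        (fun j : Fin (p + 1) → Fin n => StrictMono j ∧ Set.range i ⊆ Set.range j),
      A (pad (p + 1) m n (Nat.succ_pos p) j)) ≤ A (pad p m n hp i)

/-- Any increasing `(r+1)`-tuple whose range contains the range of an increasing
`p`-tuple `i` (with `p ≤ r`) admits an increasing `r`-subtuple whose range still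
contains the range of `i`. -/
lemma exists_mid {n p r : ℕ} (hpr : p ≤ r)
    (i : Fin p → Fin n) (j : Fin (r + 1) → Fin n)
    (hj : StrictMono j)
    (hsub : Set.range i ⊆ Set.range j) :
    ∃ k : Fin r → Fin n, StrictMono k ∧ Set.range i ⊆ Set.range k ∧
      Set.range k ⊆ Set.range j := by
  classical
  set s : Finset (Fin n) := Finset.image j Finset.univ with hs
  set t : Finset (Fin n) := Finset.image i Finset.univ with ht
  have hcoes : (↑s : Set (Fin n)) = Set.range j := by simp [hs]
  have hcoet : (↑t : Set (Fin n)) = Set.range i := by simp [ht]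
  have hscard : s.card = r + 1 := by
    rw [hs, Finset.card_image_of_injective _ hj.injective, Finset.card_univ,
      Fintype.card_fin]
  have htcard : t.card ≤ p := le_trans Finset.card_image_le (by simp)
  have hts : t ⊆ s := by
    rw [← Finset.coe_subset, hcoes, hcoet]; exact hsub
  have hsd : 0 < (s \ t).card := by
    rw [Finset.card_sdiff_of_subset hts]; omega
  obtain ⟨x, hx⟩ := Finset.card_pos.mp hsd
  rw [Finset.mem_sdiff] at hx
  have hcard' : (s.erase x).card = r := by
    rw [Finset.card_erase_of_mem hx.1, hscard]; omega
  refine ⟨(s.erase x).orderEmbOfFin hcard', ((s.erase x).orderEmbOfFin hcard').strictMono,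
    ?_, ?_⟩
  · rw [Finset.range_orderEmbOfFin, ← hcoet]
    exact_mod_cast Finset.subset_erase.mpr ⟨hts, hx.2⟩
  · rw [Finset.range_orderEmbOfFin, ← hcoes]
    exact_mod_cast Finset.erase_subset _ _

/-- For a strongly symmetric, hierarchically dominated nonnegative tensor, the entry
a_{i_1⋯i_p i_p⋯i_p} dominates, for each 1 ≤ q ≤ m − p, the sum of the entries
a_{j_1⋯j_{p+q} j_{p+q}⋯j_{p+q}} over all increasing tuples j_1 < ⋯ < j_{p+q} whose index
set contains {i_1, …, i_p}. -/
theorem hier_dominated_deep_dominance (m n : ℕ)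
    (A : (Fin m → Fin n) → ℝ)
    (hss : StronglySymmetric m n A) (hnn : ∀ f, 0 ≤ A f) (hhd : HierDominated m n A) :
    ∀ (p q : ℕ) (hp : 0 < p), p ≤ m - 1 → 0 < q → q ≤ m - p →
      ∀ i : Fin p → Fin n, StrictMono i →
        (∑ j ∈ Finset.univ.filter
            (fun j : Fin (p + q) → Fin n => StrictMono j ∧ Set.range i ⊆ Set.range j),
          A (pad (p + q) m n (by omega) j)) ≤ A (pad p m n hp i) := by
  intro p q
  induction q with
  | zero => intro hp hpm hq; exact absurd hq (by omega)
  | succ q ih =>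
    intro hp hpm hq hqm i hi
    rcases Nat.eq_zero_or_pos q with hq0 | hq0
    · subst hq0
      exact hhd p hp hpm i hi
    · have hpq : 0 < p + q := by omega
      have hpqm : p + q ≤ m - 1 := by omega
      -- choice of a (p+q)-subtuple for each (p+q+1)-tuple
      set S : Finset (Fin (p + q) → Fin n) :=
        Finset.univ.filter
          (fun k : Fin (p + q) → Fin n => StrictMono k ∧ Set.range i ⊆ Set.range k) with hS
      set S' : Finset (Fin (p + q + 1) → Fin n) :=
        Finset.univ.filter
          (fun j : Fin (p + q + 1) → Fin n => StrictMono j ∧ Set.range i ⊆ Set.range j)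
          with hS'
      let c : (Fin (p + q + 1) → Fin n) → (Fin (p + q) → Fin n) := fun j =>
        if h : ∃ k : Fin (p + q) → Fin n, StrictMono k ∧ Set.range i ⊆ Set.range k ∧
            Set.range k ⊆ Set.range j then h.choose
        else fun _ => j ⟨0, Nat.succ_pos _⟩
      have hc : ∀ j ∈ S', StrictMono (c j) ∧ Set.range i ⊆ Set.range (c j) ∧
          Set.range (c j) ⊆ Set.range j := by
        intro j hj
        rw [hS', Finset.mem_filter] at hj
        have hex : ∃ k : Fin (p + q) → Fin n, StrictMono k ∧ Set.range i ⊆ Set.range k ∧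
            Set.range k ⊆ Set.range j :=
          exists_mid (by omega) i j hj.2.1 hj.2.2
        simpa only [c, dif_pos hex] using hex.choose_spec
      have hmaps : ∀ j ∈ S', c j ∈ S := by
        intro j hj
        rw [hS, Finset.mem_filter]
        exact ⟨Finset.mem_univ _, (hc j hj).1, (hc j hj).2.1⟩
      calc (∑ j ∈ S', A (pad (p + q + 1) m n (by omega) j))
          = ∑ k ∈ S, ∑ j ∈ S'.filter (fun j => c j = k),
              A (pad (p + q + 1) m n (by omega) j) :=
            (Finset.sum_fiberwise_of_maps_to hmaps _).symm
        _ ≤ ∑ k ∈ S, ∑ j ∈ Finset.univ.filter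
              (fun j : Fin (p + q + 1) → Fin n =>
                StrictMono j ∧ Set.range k ⊆ Set.range j),
              A (pad (p + q + 1) m n (Nat.succ_pos _) j) := by
            apply Finset.sum_le_sum
            intro k hk
            apply Finset.sum_le_sum_of_subset_of_nonneg
            · intro j hj
              rw [Finset.mem_filter] at hj
              obtain ⟨hj1, hj2⟩ := hj
              have h1 := hc j hj1
              rw [hS', Finset.mem_filter] at hj1
              rw [Finset.mem_filter]
              refine ⟨Finset.mem_univ _, hj1.2.1, ?_⟩
              rw [← hj2]
              exact h1.2.2
            · intro _ _ _; exact hnn _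
        _ ≤ ∑ k ∈ S, A (pad (p + q) m n hpq k) := by
            apply Finset.sum_le_sum
            intro k hk
            rw [hS, Finset.mem_filter] at hk
            exact hhd (p + q) hpq hpqm k hk.2.1
        _ ≤ A (pad p m n hp i) := ih hp hpm hq0 (by omega) i hi
end
end

section
/- Let A = (a_{i_1⋯i_m}) be an mth order n-dimensional strongly symmetric, hierarchically dominated nonnegative tensor. Then A is a completely positive tensor: there exist r ≥ 1 and entrywise nonnegative vectors u^{(1)},…,u^{(r)} ∈ ℝ^n such that a_{i_1⋯i_m} = Σ_{k=1}^r u^{(k)}_{i_1}⋯u^{(k)}_{i_m} for all indices. -/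
noncomputable section
open Classical Finset

lemma range_pad (m n : ℕ) {p : ℕ} (hp : 0 < p) (hpm : p ≤ m) (i : Fin p → Fin n) :
    Set.range (pad p m n hp i) = Set.range i := by
  apply Set.Subset.antisymm
  · rintro x ⟨q, rfl⟩
    unfold pad
    split
    · exact ⟨_, rfl⟩
    · exact ⟨_, rfl⟩
  · rintro x ⟨k, rfl⟩
    refine ⟨⟨k, lt_of_lt_of_le k.2 hpm⟩, ?_⟩
    simp only [pad, k.isLt, dif_pos]

def aEnt (m n : ℕ) (A : (Fin m → Fin n) → ℝ) (S : Finset (Fin n)) : ℝ :=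
  if h : 0 < S.card ∧ S.card ≤ m then A (pad S.card m n h.1 (S.orderEmbOfFin rfl)) else 0

lemma aEnt_nonneg (m n : ℕ) (A : (Fin m → Fin n) → ℝ) (hnn : ∀ f, 0 ≤ A f)
    (S : Finset (Fin n)) : 0 ≤ aEnt m n A S := by
  unfold aEnt; split
  · exact hnn _
  · exact le_rfl

lemma A_eq_aEnt (m n : ℕ) (A : (Fin m → Fin n) → ℝ) (hm : 1 ≤ m)
    (hss : StronglySymmetric m n A)
    (f : Fin m → Fin n) : A f = aEnt m n A (Finset.image f Finset.univ) := by
  set S := Finset.image f Finset.univ with hS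
  have h1 : 0 < S.card := Finset.card_pos.mpr ⟨f ⟨0, hm⟩, Finset.mem_image_of_mem f (Finset.mem_univ _)⟩
  have h2 : S.card ≤ m := le_trans (Finset.card_image_le) (by simp)
  rw [aEnt, dif_pos ⟨h1, h2⟩]
  apply hss
  rw [range_pad m n h1 h2, Finset.range_orderEmbOfFin, hS, Finset.coe_image, Finset.coe_univ,
    Set.image_univ]

def cCoef (m n : ℕ) (A : (Fin m → Fin n) → ℝ) (S : Finset (Fin n)) : ℝ :=
  aEnt m n A S -
    ∑ T ∈ (Finset.univ.filter fun T => S ⊂ T ∧ T.card ≤ m).attach, cCoef m n A T.1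
termination_by n - S.card
decreasing_by
  have hT := (Finset.mem_filter.mp T.2).2
  have h1 : S.card < T.1.card := Finset.card_lt_card hT.1
  have h2 : T.1.card ≤ n := by simpa using Finset.card_le_univ T.1
  omega

lemma cCoef_eq (m n : ℕ) (A : (Fin m → Fin n) → ℝ) (S : Finset (Fin n)) :
    cCoef m n A S = aEnt m n A S -
      ∑ T ∈ (Finset.univ.filter fun T => S ⊂ T ∧ T.card ≤ m), cCoef m n A T := by
  rw [cCoef, Finset.sum_attach]

lemma aEnt_eq_sum (m n : ℕ) (A : (Fin m → Fin n) → ℝ) (R : Finset (Fin n))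
    (h1 : 0 < R.card) (h2 : R.card ≤ m) :
    aEnt m n A R =
      ∑ S ∈ Finset.univ.filter (fun S => R ⊆ S ∧ S.card ≤ m), cCoef m n A S := by
  have hsplit : (Finset.univ.filter fun S : Finset (Fin n) => R ⊆ S ∧ S.card ≤ m)
      = insert R (Finset.univ.filter fun S => R ⊂ S ∧ S.card ≤ m) := by
    ext S
    simp only [Finset.mem_filter, Finset.mem_univ, true_and, Finset.mem_insert]
    constructor
    · rintro ⟨hsub, hc⟩
      by_cases h : S = R
      · exact Or.inl h
      · exact Or.inr ⟨lt_of_le_of_ne (Finset.le_iff_subset.mpr hsub) (Ne.symm h), hc⟩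
    · rintro (rfl | ⟨h, hc⟩)
      · exact ⟨Finset.Subset.rfl, h2⟩
      · exact ⟨h.subset, hc⟩
  have hR : R ∉ Finset.univ.filter (fun S : Finset (Fin n) => R ⊂ S ∧ S.card ≤ m) := by
    simp only [Finset.mem_filter]
    rintro ⟨-, h, -⟩
    exact (lt_irrefl R h)
  rw [hsplit, Finset.sum_insert hR, cCoef_eq]
  ring

lemma cCoef_eq_aEnt (m n : ℕ) (A : (Fin m → Fin n) → ℝ) (S : Finset (Fin n))
    (hSm : m ≤ S.card) : cCoef m n A S = aEnt m n A S := by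
  rw [cCoef_eq]
  have h : (Finset.univ.filter fun T : Finset (Fin n) => S ⊂ T ∧ T.card ≤ m) = ∅ := by
    ext T
    simp only [Finset.mem_filter, Finset.mem_univ, true_and, Finset.notMem_empty, iff_false,
      not_and]
    intro h1
    have := Finset.card_lt_card h1
    omega
  rw [h, Finset.sum_empty]
  ring

lemma key_step (m n : ℕ) (A : (Fin m → Fin n) → ℝ) (hm : 1 ≤ m)
    (hss : StronglySymmetric m n A) (hnn : ∀ f, 0 ≤ A f) (hhd : HierDominated m n A)
    (S : Finset (Fin n)) (h1 : 0 < S.card) (h2 : S.card ≤ m)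
    (IH : ∀ U : Finset (Fin n), S ⊂ U → U.card ≤ m → 0 ≤ cCoef m n A U) :
    0 ≤ cCoef m n A S := by
  rcases eq_or_lt_of_le h2 with hcm | hcm
  · rw [cCoef_eq_aEnt m n A S hcm.ge]
    exact aEnt_nonneg m n A hnn S
  -- main case : S.card < m
  set p := S.card with hp
  have hpm1 : p ≤ m - 1 := by omega
  have hi : StrictMono (⇑(S.orderEmbOfFin (rfl : S.card = p))) :=
    (S.orderEmbOfFin rfl).strictMono
  have hd := hhd p h1 hpm1 (⇑(S.orderEmbOfFin rfl)) hi
  -- notation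
  set 𝒯 : Finset (Finset (Fin n)) :=
    Finset.univ.filter (fun T => S ⊆ T ∧ T.card = p + 1) with h𝒯
  set J : Finset (Fin (p+1) → Fin n) :=
    Finset.univ.filter
      (fun j : Fin (p + 1) → Fin n => StrictMono j ∧
        Set.range (⇑(S.orderEmbOfFin (rfl : S.card = p))) ⊆ Set.range j) with hJ
  -- each term of the LHS sum is an aEnt
  have hterm : ∀ j : Fin (p+1) → Fin n,
      A (pad (p+1) m n (Nat.succ_pos p) j) = aEnt m n A (Finset.image j Finset.univ) := by
    intro j
    rw [A_eq_aEnt m n A hm hss (pad (p+1) m n (Nat.succ_pos p) j)]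
    congr 1
    apply Finset.coe_injective
    simp only [Finset.coe_image, Finset.coe_univ, Set.image_univ]
    exact range_pad m n (Nat.succ_pos p) (by omega) j
  -- the image of J under (fun j => image j univ) is 𝒯
  have himg : J.image (fun j => Finset.image j Finset.univ) = 𝒯 := by
    ext T
    simp only [hJ, h𝒯, Finset.mem_image, Finset.mem_filter, Finset.mem_univ, true_and]
    constructor
    · rintro ⟨j, ⟨hmono, hrange⟩, rfl⟩
      constructor
      · intro x hx
        have hx' : x ∈ Set.range j := by
          apply hrange
          rw [Finset.range_orderEmbOfFin]
          exact hx
        obtain ⟨q, rfl⟩ := hx'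
        exact Finset.mem_image_of_mem _ (Finset.mem_univ q)
      · rw [Finset.card_image_of_injective _ hmono.injective, Finset.card_univ,
          Fintype.card_fin]
    · rintro ⟨hsub, hcard⟩
      refine ⟨⇑(T.orderEmbOfFin hcard), ⟨(T.orderEmbOfFin hcard).strictMono, ?_⟩, ?_⟩
      · rw [Finset.range_orderEmbOfFin, Finset.range_orderEmbOfFin]
        exact_mod_cast hsub
      · apply Finset.coe_injective
        rw [Finset.coe_image, Finset.coe_univ, Set.image_univ, Finset.range_orderEmbOfFin]
  -- injectivity
  have hinj : ∀ j ∈ J, ∀ j' ∈ J, Finset.image j Finset.univ = Finset.image j' Finset.univ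
      → j = j' := by
    intro j hj j' hj' hee
    simp only [hJ, Finset.mem_filter, Finset.mem_univ, true_and] at hj hj'
    have hre : Set.range j = Set.range j' := by
      rw [← Set.image_univ, ← Set.image_univ, ← Finset.coe_univ, ← Finset.coe_image,
        ← Finset.coe_image, hee]
    haveI : WellFoundedLT (Fin (p+1)) := inferInstance
    exact (StrictMono.range_inj hj.1 hj'.1).mp hre
  -- the LHS sum equals the sum over 𝒯
  have hstep : (∑ j ∈ J, A (pad (p+1) m n (Nat.succ_pos p) j)) = ∑ T ∈ 𝒯, aEnt m n A T := by
    rw [Finset.sum_congr rfl (fun j _ => hterm j), ← himg,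
      Finset.sum_image hinj]
  -- A (pad p ...) = aEnt S
  have hAS : A (pad p m n h1 (⇑(S.orderEmbOfFin rfl))) = aEnt m n A S := by
    rw [aEnt, dif_pos ⟨h1, h2⟩]
  have hTineq : (∑ T ∈ 𝒯, aEnt m n A T) ≤ aEnt m n A S := by
    rw [← hstep, ← hAS]; exact hd
  -- now expand each aEnt T
  set W : Finset (Finset (Fin n)) := Finset.univ.filter (fun U => U.card ≤ m) with hW
  have hexp : ∀ T ∈ 𝒯, aEnt m n A T
      = ∑ U ∈ W, (if T ⊆ U then cCoef m n A U else 0) := by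
    intro T hT
    simp only [h𝒯, Finset.mem_filter, Finset.mem_univ, true_and] at hT
    rw [aEnt_eq_sum m n A T (by omega) (by omega)]
    rw [hW, ← Finset.sum_filter, Finset.filter_filter]
    apply Finset.sum_congr _ (fun _ _ => rfl)
    apply Finset.filter_congr
    intro U _
    exact and_comm
  have hswap : (∑ T ∈ 𝒯, aEnt m n A T)
      = ∑ U ∈ W, ∑ T ∈ 𝒯, (if T ⊆ U then cCoef m n A U else 0) := by
    rw [Finset.sum_congr rfl hexp, Finset.sum_comm]
  -- termwise lower bound
  have hlb : ∀ U ∈ W, (if S ⊂ U then cCoef m n A U else 0)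
      ≤ ∑ T ∈ 𝒯, (if T ⊆ U then cCoef m n A U else 0) := by
    intro U hU
    simp only [hW, Finset.mem_filter, Finset.mem_univ, true_and] at hU
    by_cases hSU : S ⊂ U
    · have hcU : 0 ≤ cCoef m n A U := IH U hSU hU
      obtain ⟨x, hxU, hxS⟩ := Finset.exists_of_ssubset hSU
      have hT0mem : insert x S ∈ 𝒯 := by
        simp only [h𝒯, Finset.mem_filter, Finset.mem_univ, true_and]
        exact ⟨Finset.subset_insert x S, by rw [Finset.card_insert_of_notMem hxS]⟩
      have hT0sub : insert x S ⊆ U := Finset.insert_subset hxU hSU.subset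
      have := Finset.single_le_sum (f := fun T => if T ⊆ U then cCoef m n A U else 0)
        (fun T _ => by split <;> simp [hcU]) hT0mem
      simp only [if_pos hT0sub] at this
      rwa [if_pos hSU]
    · rw [if_neg hSU]
      apply Finset.sum_nonneg
      intro T hT
      simp only [h𝒯, Finset.mem_filter, Finset.mem_univ, true_and] at hT
      split
      · rename_i hTU
        exfalso
        apply hSU
        have hST : S ⊂ T := by
          refine lt_of_le_of_ne (Finset.le_iff_subset.mpr hT.1) ?_
          intro h
          rw [← h] at hT
          omega
        exact lt_of_lt_of_le hST (Finset.le_iff_subset.mpr hTU)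
      · exact le_rfl
  -- combine
  have hfinal : (∑ U ∈ Finset.univ.filter (fun U : Finset (Fin n) => S ⊂ U ∧ U.card ≤ m),
      cCoef m n A U) ≤ aEnt m n A S := by
    have e1 : (∑ U ∈ Finset.univ.filter (fun U : Finset (Fin n) => S ⊂ U ∧ U.card ≤ m),
        cCoef m n A U) = ∑ U ∈ W, (if S ⊂ U then cCoef m n A U else 0) := by
      rw [hW, ← Finset.sum_filter, Finset.filter_filter]
      apply Finset.sum_congr _ (fun _ _ => rfl)
      apply Finset.filter_congr
      intro U _
      exact and_comm
    rw [e1]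
    calc (∑ U ∈ W, if S ⊂ U then cCoef m n A U else 0)
        ≤ ∑ U ∈ W, ∑ T ∈ 𝒯, (if T ⊆ U then cCoef m n A U else 0) :=
          Finset.sum_le_sum hlb
      _ = ∑ T ∈ 𝒯, aEnt m n A T := hswap.symm
      _ ≤ aEnt m n A S := hTineq
  rw [cCoef_eq]
  linarith

lemma c_nonneg (m n : ℕ) (A : (Fin m → Fin n) → ℝ) (hm : 1 ≤ m)
    (hss : StronglySymmetric m n A) (hnn : ∀ f, 0 ≤ A f) (hhd : HierDominated m n A) :
    ∀ S : Finset (Fin n), 0 < S.card → S.card ≤ m → 0 ≤ cCoef m n A S := by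
  suffices H : ∀ k : ℕ, ∀ S : Finset (Fin n), n - S.card ≤ k → 0 < S.card → S.card ≤ m →
      0 ≤ cCoef m n A S from fun S h1 h2 => H (n - S.card) S le_rfl h1 h2
  intro k
  induction k with
  | zero =>
    intro S hk h1 h2
    apply key_step m n A hm hss hnn hhd S h1 h2
    intro U hU _
    exfalso
    have hc1 : S.card < U.card := Finset.card_lt_card hU
    have hc2 : U.card ≤ n := by simpa using Finset.card_le_univ U
    have hc3 : S.card ≤ n := by simpa using Finset.card_le_univ S
    omega
  | succ k ih =>
    intro S hk h1 h2
    apply key_step m n A hm hss hnn hhd S h1 h2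
    intro U hU hUm
    have hc1 : S.card < U.card := Finset.card_lt_card hU
    have hc2 : U.card ≤ n := by simpa using Finset.card_le_univ U
    exact ih U (by omega) (by omega) hUm

/-- A strongly symmetric, hierarchically dominated nonnegative tensor is a completely
positive tensor. -/
theorem hier_dominated_is_cp (m n : ℕ) (hm : 1 ≤ m)
    (A : (Fin m → Fin n) → ℝ)
    (hss : StronglySymmetric m n A) (hnn : ∀ f, 0 ≤ A f) (hhd : HierDominated m n A) :
    IsCPTensor m n A := by
  classical
  set c' : Finset (Fin n) → ℝ :=
    fun S => if 0 < S.card ∧ S.card ≤ m then cCoef m n A S else 0 with hc'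
  have hc'nn : ∀ S, 0 ≤ c' S := by
    intro S
    rw [hc']
    dsimp only
    split_ifs with h
    · exact c_nonneg m n A hm hss hnn hhd S h.1 h.2
    · exact le_rfl
  set d : Finset (Fin n) → ℝ := fun S => (c' S) ^ ((m : ℝ)⁻¹) with hd2
  have hdnn : ∀ S, 0 ≤ d S := fun S => Real.rpow_nonneg (hc'nn S) _
  set e := (Fintype.equivFin (Finset (Fin n))).symm with he
  refine ⟨Fintype.card (Finset (Fin n)), Fintype.card_pos,
    fun k i => if i ∈ e k then d (e k) else 0, ?_, ?_⟩
  · intro k i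
    dsimp only
    split_ifs
    · exact hdnn _
    · exact le_rfl
  · intro f
    have hsum : (∑ k, ∏ j, if f j ∈ e k then d (e k) else 0)
        = ∑ S : Finset (Fin n), ∏ j, if f j ∈ S then d S else 0 :=
      Equiv.sum_comp e (fun S => ∏ j, if f j ∈ S then d S else 0)
    rw [hsum]
    set R := Finset.image f Finset.univ with hR
    have hRpos : 0 < R.card :=
      Finset.card_pos.mpr ⟨f ⟨0, hm⟩, Finset.mem_image_of_mem f (Finset.mem_univ _)⟩
    have hRm : R.card ≤ m := le_trans (Finset.card_image_le) (by simp)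
    have hprod : ∀ S : Finset (Fin n),
        (∏ j, if f j ∈ S then d S else 0) = if R ⊆ S ∧ S.card ≤ m then cCoef m n A S else 0 := by
      intro S
      by_cases hRS : R ⊆ S
      · have hall : ∀ j : Fin m, (if f j ∈ S then d S else 0) = d S :=
          fun j => if_pos (hRS (Finset.mem_image_of_mem f (Finset.mem_univ j)))
        rw [Finset.prod_congr rfl (fun j _ => hall j), Finset.prod_const, Finset.card_univ,
          Fintype.card_fin]
        have hdm : d S ^ m = c' S := by
          rw [hd2]
          dsimp only
          rw [← Real.rpow_natCast ((c' S) ^ ((m : ℝ)⁻¹)) m, ← Real.rpow_mul (hc'nn S),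
            inv_mul_cancel₀ (by exact_mod_cast Nat.one_le_iff_ne_zero.mp hm : (m : ℝ) ≠ 0),
            Real.rpow_one]
        rw [hdm, hc']
        dsimp only
        have hSpos : 0 < S.card := lt_of_lt_of_le hRpos (Finset.card_le_card hRS)
        by_cases h2 : S.card ≤ m
        · rw [if_pos ⟨hSpos, h2⟩, if_pos ⟨hRS, h2⟩]
        · rw [if_neg (fun h => h2 h.2), if_neg (fun h => h2 h.2)]
      · rw [if_neg (fun h => hRS h.1)]
        obtain ⟨j, hj⟩ : ∃ j : Fin m, f j ∉ S := by
          by_contra h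
          push_neg at h
          apply hRS
          intro x hx
          obtain ⟨j, -, rfl⟩ := Finset.mem_image.mp hx
          exact h j
        exact Finset.prod_eq_zero (Finset.mem_univ j) (if_neg hj)
    rw [Finset.sum_congr rfl (fun S _ => hprod S), ← Finset.sum_filter,
      ← aEnt_eq_sum m n A R hRpos hRm]
    exact A_eq_aEnt m n A hm hss f
end
end

section
/- Let A = (a_{i_1⋯i_m}) be an mth order n-dimensional strongly symmetric, hierarchically dominated nonnegative tensor. Then A admits a completely positive decomposition A = Σ_{k=1}^r (u^{(k)})^m with nonnegative vectors u^{(k)} ∈ ℝ^n where the number of terms satisfies r ≤ Σ_{k=0}^{m−1} C(n, m−k) = Σ_{l=1}^{m} C(n, l); in particular the CP rank of A (the minimum such r) is at most Σ_{k=0}^{m−1} C(n, m−k). -/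
noncomputable section
open Classical Finset

namespace HDCP

lemma range_pad {p m n : ℕ} (hp : 0 < p) (hpm : p ≤ m) (i : Fin p → Fin n) :
    Set.range (pad p m n hp i) = Set.range i := by
  apply Set.Subset.antisymm
  · rintro x ⟨q, rfl⟩
    unfold pad
    split <;> exact Set.mem_range_self _
  · rintro x ⟨k, rfl⟩
    refine ⟨⟨k, lt_of_lt_of_le k.2 hpm⟩, ?_⟩
    simp [pad, k.2]

/-- value of `A` on the subset `T` -/
def Ahat (m n : ℕ) (A : (Fin m → Fin n) → ℝ) (T : Finset (Fin n)) : ℝ :=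
  if h : T.Nonempty ∧ T.card ≤ m then
    A (pad T.card m n (Finset.card_pos.2 h.1) (fun q => T.orderEmbOfFin rfl q))
  else 0

lemma Ahat_nonneg (m n : ℕ) (A : (Fin m → Fin n) → ℝ) (hnn : ∀ f, 0 ≤ A f)
    (T : Finset (Fin n)) : 0 ≤ Ahat m n A T := by
  unfold Ahat; split
  · exact hnn _
  · exact le_refl 0

lemma Ahat_spec (m n : ℕ) (hm : 1 ≤ m) (A : (Fin m → Fin n) → ℝ)
    (hss : StronglySymmetric m n A) (f : Fin m → Fin n) :
    Ahat m n A (Finset.image f Finset.univ) = A f := by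
  have hne : (Finset.image f Finset.univ).Nonempty := by
    have : (Finset.univ : Finset (Fin m)).Nonempty := ⟨⟨0, hm⟩, Finset.mem_univ _⟩
    exact this.image f
  have hcard : (Finset.image f Finset.univ).card ≤ m := by
    refine le_trans (Finset.card_image_le) ?_
    simp
  rw [Ahat, dif_pos ⟨hne, hcard⟩]
  apply hss
  rw [range_pad _ hcard]
  rw [Finset.range_orderEmbOfFin]
  rw [← Set.image_univ, ← Finset.coe_univ, ← Finset.coe_image]

/-- general version: A at pad of any strictMono tuple equals Ahat of its image -/
lemma Ahat_pad (m n : ℕ) (hm : 1 ≤ m) (A : (Fin m → Fin n) → ℝ)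
    (hss : StronglySymmetric m n A) {p : ℕ} (hp : 0 < p) (hpm : p ≤ m)
    (j : Fin p → Fin n) :
    A (pad p m n hp j) = Ahat m n A (Finset.image j Finset.univ) := by
  rw [← Ahat_spec m n hm A hss (pad p m n hp j)]
  congr 1
  apply Finset.coe_injective
  simp only [Finset.coe_image, Finset.coe_univ, Set.image_univ, range_pad hp hpm]

/-- the Möbius-type coefficients, by downward recursion -/
def bb (m n : ℕ) (A : (Fin m → Fin n) → ℝ) (S : Finset (Fin n)) : ℝ :=
  Ahat m n A S -
    ∑ T ∈ (Finset.univ.filter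
        (fun T : Finset (Fin n) => S ⊂ T ∧ T.card ≤ m)).attach,
      bb m n A T.1
termination_by n - S.card
decreasing_by
  have h := T.2
  simp only [Finset.mem_filter] at h
  have h1 : S.card < T.1.card := Finset.card_lt_card h.2.1
  have h2 : T.1.card ≤ n := le_trans (Finset.card_le_univ _) (by simp)
  omega

lemma bb_def (m n : ℕ) (A : (Fin m → Fin n) → ℝ) (S : Finset (Fin n)) :
    bb m n A S = Ahat m n A S -
      ∑ T ∈ Finset.univ.filter (fun T : Finset (Fin n) => S ⊂ T ∧ T.card ≤ m),
        bb m n A T := by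
  rw [bb, Finset.sum_attach]

/-- inversion: sum of bb over supersets gives Ahat -/
lemma sum_bb (m n : ℕ) (A : (Fin m → Fin n) → ℝ) (T : Finset (Fin n))
    (hT : T.card ≤ m) :
    ∑ S ∈ Finset.univ.filter (fun S : Finset (Fin n) => T ⊆ S ∧ S.card ≤ m),
      bb m n A S = Ahat m n A T := by
  have hset : Finset.univ.filter (fun S : Finset (Fin n) => T ⊆ S ∧ S.card ≤ m)
      = insert T (Finset.univ.filter (fun S : Finset (Fin n) => T ⊂ S ∧ S.card ≤ m)) := by
    ext S
    simp only [Finset.mem_filter, Finset.mem_univ, true_and, Finset.mem_insert]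
    constructor
    · rintro ⟨hsub, hc⟩
      rcases eq_or_ne S T with h | h
      · exact Or.inl h
      · exact Or.inr ⟨⟨hsub, fun h' => h (Finset.Subset.antisymm h' hsub)⟩, hc⟩
    · rintro (rfl | ⟨hss, hc⟩)
      · exact ⟨Finset.Subset.refl _, hT⟩
      · exact ⟨hss.subset, hc⟩
  rw [hset, Finset.sum_insert (by
    simp only [Finset.mem_filter, Finset.mem_univ, true_and, not_and]
    exact fun h => absurd h (ssubset_irrefl T)), bb_def]
  ring

end HDCP

namespace HDCP

lemma dom_sets (m n : ℕ) (hm : 1 ≤ m) (A : (Fin m → Fin n) → ℝ)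
    (hss : StronglySymmetric m n A) (hhd : HierDominated m n A)
    (S : Finset (Fin n)) (hne : S.Nonempty) (hc : S.card ≤ m - 1) :
    ∑ T ∈ Finset.univ.filter
        (fun T : Finset (Fin n) => S ⊆ T ∧ T.card = S.card + 1),
      Ahat m n A T ≤ Ahat m n A S := by
  have hp : 0 < S.card := Finset.card_pos.2 hne
  have hpm : S.card ≤ m := le_trans hc (Nat.sub_le m 1)
  have hp1m : S.card + 1 ≤ m := by omega
  have hmono : StrictMono (fun q => S.orderEmbOfFin rfl q) :=
    (S.orderEmbOfFin rfl).strictMono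
  have key := hhd S.card hp hc _ hmono
  have himgS : Finset.image (fun q => S.orderEmbOfFin rfl q) Finset.univ = S := by
    apply Finset.coe_injective
    simp only [Finset.coe_image, Finset.coe_univ, Set.image_univ]
    exact Finset.range_orderEmbOfFin S rfl
  rw [Ahat_pad m n hm A hss hp hpm, himgS] at key
  have hsum : (∑ j ∈ Finset.univ.filter
        (fun j : Fin (S.card + 1) → Fin n =>
          StrictMono j ∧ Set.range (fun q => S.orderEmbOfFin rfl q) ⊆ Set.range j),
      A (pad (S.card + 1) m n (Nat.succ_pos S.card) j))
      = ∑ T ∈ Finset.univ.filter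
          (fun T : Finset (Fin n) => S ⊆ T ∧ T.card = S.card + 1),
        Ahat m n A T := by
    have hrangeT : ∀ j : Fin (S.card + 1) → Fin n,
        Set.range j = ↑(Finset.image j Finset.univ) := by
      intro j
      simp only [Finset.coe_image, Finset.coe_univ, Set.image_univ]
    refine Finset.sum_bij' (i := fun j _ => Finset.image j Finset.univ)
      (j := fun T hT => fun q => T.orderEmbOfFin ((Finset.mem_filter.1 hT).2.2) q)
      ?_ ?_ ?_ ?_ ?_
    · intro j hj
      simp only [Finset.mem_filter, Finset.mem_univ, true_and] at hj ⊢
      refine ⟨?_, ?_⟩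
      · have h2 := hj.2
        rw [show (Set.range fun q => (S.orderEmbOfFin rfl) q) = (↑S : Set (Fin n))
            from Finset.range_orderEmbOfFin S rfl, hrangeT j] at h2
        exact_mod_cast h2
      · rw [Finset.card_image_of_injective _ hj.1.injective, Finset.card_univ,
          Fintype.card_fin]
    · intro T hT
      have hT' := Finset.mem_filter.1 hT
      simp only [Finset.mem_filter, Finset.mem_univ, true_and]
      refine ⟨(T.orderEmbOfFin _).strictMono, ?_⟩
      rw [Finset.range_orderEmbOfFin, Finset.range_orderEmbOfFin]
      exact_mod_cast hT'.2.1
    · intro j hj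
      simp only [Finset.mem_filter, Finset.mem_univ, true_and] at hj
      exact (Finset.orderEmbOfFin_unique _
        (fun x => Finset.mem_image_of_mem j (Finset.mem_univ x)) hj.1).symm
    · intro T hT
      apply Finset.coe_injective
      simp only [Finset.coe_image, Finset.coe_univ, Set.image_univ]
      exact Finset.range_orderEmbOfFin _ _
    · intro j hj
      simp only [Finset.mem_filter, Finset.mem_univ, true_and] at hj
      exact Ahat_pad m n hm A hss (Nat.succ_pos S.card) hp1m j
  rw [← hsum]
  exact key

end HDCP

namespace HDCP

lemma bb_nonneg (m n : ℕ) (hm : 1 ≤ m) (A : (Fin m → Fin n) → ℝ)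
    (hss : StronglySymmetric m n A) (hnn : ∀ f, 0 ≤ A f) (hhd : HierDominated m n A) :
    ∀ S : Finset (Fin n), S.Nonempty → S.card ≤ m → 0 ≤ bb m n A S := by
  suffices H : ∀ k, ∀ S : Finset (Fin n), n - S.card ≤ k → S.Nonempty → S.card ≤ m →
      0 ≤ bb m n A S from fun S h1 h2 => H _ S le_rfl h1 h2
  intro k
  induction k using Nat.strong_induction_on with
  | _ k IH =>
  intro S hk hne hcm
  have hSn : S.card ≤ n := le_trans (Finset.card_le_univ _) (by simp)
  rw [bb_def]
  rw [sub_nonneg]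
  by_cases hfull : S.card = m
  · have hemp : Finset.univ.filter (fun T : Finset (Fin n) => S ⊂ T ∧ T.card ≤ m) = ∅ := by
      rw [Finset.filter_eq_empty_iff]
      rintro T _ ⟨h1, h2⟩
      have := Finset.card_lt_card h1
      omega
    rw [hemp, Finset.sum_empty]
    exact Ahat_nonneg m n A hnn S
  · have hcm1 : S.card ≤ m - 1 := by omega
    have key := dom_sets m n hm A hss hhd S hne hcm1
    have IH' : ∀ U : Finset (Fin n), S ⊂ U → U.card ≤ m → 0 ≤ bb m n A U := by
      intro U hSU hUm
      have h1 : S.card < U.card := Finset.card_lt_card hSU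
      have h2 : U.card ≤ n := le_trans (Finset.card_le_univ _) (by simp)
      have hne' : U.Nonempty := Finset.card_pos.1 (by omega)
      exact IH (n - U.card) (by omega) U le_rfl hne' hUm
    refine le_trans ?_ key
    -- expand each Ahat T as a sum of bb over supersets, and swap
    have expand : ∀ T ∈ Finset.univ.filter
        (fun T : Finset (Fin n) => S ⊆ T ∧ T.card = S.card + 1),
        Ahat m n A T = ∑ U ∈ (Finset.univ : Finset (Finset (Fin n))),
          ite (T ⊆ U ∧ U.card ≤ m) (bb m n A U) 0 := by
      intro T hT
      simp only [Finset.mem_filter, Finset.mem_univ, true_and] at hT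
      rw [← sum_bb m n A T (by omega), Finset.sum_filter]
    rw [Finset.sum_congr rfl expand, Finset.sum_comm]
    rw [show (∑ T ∈ Finset.univ.filter
        (fun T : Finset (Fin n) => S ⊂ T ∧ T.card ≤ m), bb m n A T)
      = ∑ U ∈ (Finset.univ : Finset (Finset (Fin n))),
          ite (S ⊂ U ∧ U.card ≤ m) (bb m n A U) 0 from Finset.sum_filter _ _]
    apply Finset.sum_le_sum
    intro U _
    rw [← Finset.sum_filter, Finset.sum_const]
    by_cases h : S ⊂ U ∧ U.card ≤ m
    · rw [if_pos h]
      have hb : 0 ≤ bb m n A U := IH' U h.1 h.2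
      obtain ⟨x, hxU, hxS⟩ := Finset.exists_of_ssubset h.1
      have hmem : insert x S ∈ (Finset.univ.filter
          (fun T : Finset (Fin n) => S ⊆ T ∧ T.card = S.card + 1)).filter
          (fun T => T ⊆ U ∧ U.card ≤ m) := by
        simp only [Finset.mem_filter, Finset.mem_univ, true_and]
        exact ⟨⟨Finset.subset_insert x S, Finset.card_insert_of_notMem hxS⟩,
          Finset.insert_subset hxU h.1.subset, h.2⟩
      have hcard1 : 1 ≤ ((Finset.univ.filter
          (fun T : Finset (Fin n) => S ⊆ T ∧ T.card = S.card + 1)).filter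
          (fun T => T ⊆ U ∧ U.card ≤ m)).card :=
        Finset.card_pos.2 ⟨_, hmem⟩
      rw [nsmul_eq_mul]
      calc bb m n A U = 1 * bb m n A U := (one_mul _).symm
        _ ≤ _ := mul_le_mul_of_nonneg_right (by exact_mod_cast hcard1) hb
    · rw [if_neg h]
      have hemp2 : (Finset.univ.filter
          (fun T : Finset (Fin n) => S ⊆ T ∧ T.card = S.card + 1)).filter
          (fun T => T ⊆ U ∧ U.card ≤ m) = ∅ := by
        rw [Finset.filter_eq_empty_iff]
        intro T hT
        simp only [Finset.mem_filter, Finset.mem_univ, true_and] at hT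
        rintro ⟨hTU, hUm⟩
        refine h ⟨?_, hUm⟩
        have hTc : T.card ≤ U.card := Finset.card_le_card hTU
        refine lt_of_le_of_ne (hT.1.trans hTU) ?_
        intro hEq
        have : U.card = S.card := by rw [← hEq]
        omega
      rw [hemp2]
      simp

end HDCP

/-- A strongly symmetric, hierarchically dominated nonnegative tensor admits a completely
positive decomposition A = Σ_{k=1}^r (u^{(k)})^m with nonnegative vectors u^{(k)} and with
r ≤ Σ_{l=1}^{m} C(n, l) (= Σ_{k=0}^{m-1} C(n, m-k)); in particular its CP rank is at most
this bound. -/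
theorem hier_dominated_cprank_bound (m n : ℕ) (hm : 1 ≤ m)
    (A : (Fin m → Fin n) → ℝ)
    (hss : StronglySymmetric m n A) (hnn : ∀ f, 0 ≤ A f) (hhd : HierDominated m n A) :
    ∃ (r : ℕ) (u : Fin r → Fin n → ℝ),
      (∀ k i, 0 ≤ u k i) ∧
      (∀ f : Fin m → Fin n, A f = ∑ k, ∏ j, u k (f j)) ∧
      r ≤ ∑ l ∈ Finset.Icc 1 m, n.choose l := by
  classical
  set 𝒮 : Finset (Finset (Fin n)) :=
    Finset.univ.filter (fun S : Finset (Fin n) => S.Nonempty ∧ S.card ≤ m) with h𝒮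
  set e := 𝒮.equivFin with he
  refine ⟨𝒮.card, fun k i =>
    if i ∈ (e.symm k : Finset (Fin n)) then
      HDCP.bb m n A (e.symm k : Finset (Fin n)) ^ (m⁻¹ : ℝ) else 0, ?_, ?_, ?_⟩
  · intro k i
    dsimp only
    split
    · have hmem := Finset.mem_filter.1 (e.symm k).2
      exact Real.rpow_nonneg
        (HDCP.bb_nonneg m n hm A hss hnn hhd _ hmem.2.1 hmem.2.2) _
    · exact le_refl 0
  · intro f
    have huniv : (Finset.univ : Finset (Fin m)).Nonempty := ⟨⟨0, hm⟩, Finset.mem_univ _⟩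
    have hTne : (Finset.image f Finset.univ).Nonempty := huniv.image f
    have hTcard : (Finset.image f Finset.univ).card ≤ m :=
      le_trans Finset.card_image_le (by simp)
    -- per-subset product value
    have hprod : ∀ S : Finset (Fin n), S ∈ 𝒮 →
        (∏ j, if f j ∈ S then HDCP.bb m n A S ^ (m⁻¹ : ℝ) else 0)
        = if Finset.image f Finset.univ ⊆ S then HDCP.bb m n A S else 0 := by
      intro S hS
      rw [h𝒮, Finset.mem_filter] at hS
      have hb : 0 ≤ HDCP.bb m n A S :=
        HDCP.bb_nonneg m n hm A hss hnn hhd S hS.2.1 hS.2.2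
      by_cases hsub : ∀ j, f j ∈ S
      · rw [Finset.prod_congr rfl (fun j _ => if_pos (hsub j)), Finset.prod_const,
          Finset.card_univ, Fintype.card_fin,
          if_pos (Finset.image_subset_iff.2 fun j _ => hsub j)]
        rw [← Real.rpow_natCast (HDCP.bb m n A S ^ (m⁻¹ : ℝ)) m, ← Real.rpow_mul hb,
          inv_mul_cancel₀ (Nat.cast_ne_zero.2 (by omega) : (m : ℝ) ≠ 0),
          Real.rpow_one]
      · obtain ⟨j0, hj0⟩ := not_forall.1 hsub
        have hz : (∏ j, if f j ∈ S then HDCP.bb m n A S ^ (m⁻¹ : ℝ) else 0) = 0 :=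
          Finset.prod_eq_zero (Finset.mem_univ j0) (if_neg hj0)
        rw [hz, if_neg (fun hc => hj0 (hc (Finset.mem_image_of_mem f (Finset.mem_univ j0))))]
    calc A f = HDCP.Ahat m n A (Finset.image f Finset.univ) :=
        (HDCP.Ahat_spec m n hm A hss f).symm
      _ = ∑ S ∈ Finset.univ.filter
            (fun S : Finset (Fin n) => Finset.image f Finset.univ ⊆ S ∧ S.card ≤ m),
          HDCP.bb m n A S := (HDCP.sum_bb m n A _ hTcard).symm
      _ = ∑ S ∈ 𝒮.filter (fun S => Finset.image f Finset.univ ⊆ S),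
          HDCP.bb m n A S := by
            apply Finset.sum_congr _ (fun _ _ => rfl)
            ext S
            simp only [h𝒮, Finset.mem_filter, Finset.mem_univ, true_and]
            constructor
            · rintro ⟨hsub, hc⟩
              exact ⟨⟨hTne.mono hsub, hc⟩, hsub⟩
            · rintro ⟨⟨_, hc⟩, hsub⟩
              exact ⟨hsub, hc⟩
      _ = ∑ S ∈ 𝒮, if Finset.image f Finset.univ ⊆ S then HDCP.bb m n A S else 0 :=
          Finset.sum_filter _ _
      _ = ∑ S ∈ 𝒮, ∏ j, (if f j ∈ S then HDCP.bb m n A S ^ (m⁻¹ : ℝ) else 0) :=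
          (Finset.sum_congr rfl (fun S hS => hprod S hS)).symm
      _ = ∑ S : {x // x ∈ 𝒮},
            ∏ j, (if f j ∈ (S : Finset (Fin n)) then
              HDCP.bb m n A (S : Finset (Fin n)) ^ (m⁻¹ : ℝ) else 0) :=
          (Finset.sum_coe_sort 𝒮 _).symm
      _ = ∑ k, ∏ j, (if f j ∈ (e.symm k : Finset (Fin n)) then
              HDCP.bb m n A (e.symm k : Finset (Fin n)) ^ (m⁻¹ : ℝ) else 0) := by
            exact (Equiv.sum_comp e.symm _).symm
  · refine le_trans (Finset.card_le_card (?_ :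
        𝒮 ⊆ (Finset.Icc 1 m).biUnion (fun l => Finset.powersetCard l Finset.univ)))
      (le_trans Finset.card_biUnion_le (le_of_eq ?_))
    · intro S hS
      rw [h𝒮, Finset.mem_filter] at hS
      rw [Finset.mem_biUnion]
      exact ⟨S.card, Finset.mem_Icc.2 ⟨Finset.card_pos.2 hS.2.1, hS.2.2⟩,
        Finset.mem_powersetCard.2 ⟨Finset.subset_univ _, rfl⟩⟩
    · refine Finset.sum_congr rfl (fun l _ => ?_)
      rw [Finset.card_powersetCard, Finset.card_univ, Fintype.card_fin]
end
end
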